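/- Let X_1,...,X_n be independent Bernoulli random variables with E[X_i] ≤ r for all i, where 0 < r < 1, and let w_i : {0,1}^{i-1} → [0,1] be arbitrary functions. Then for every B ≥ 1: P(∑_i w_i(X_1,...,X_{i-1}) X_i ≥ (3/((1-r)² r)) B AND ∑_i w_i(X_1,...,X_{i-1})(1 - X_i) ≤ B) ≤ exp(−B). -/

import Mathlib

open MeasureTheory ProbabilityTheory

private lemma key_ineq (r : ℝ) (hr0 : 0 < r) (hr1 : r < 1) (p v : ℝ)
    (hp0 : 0 ≤ p) (hpr : p ≤ r) (hv0 : 0 ≤ v) (hv1 : v ≤ 1) :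
    p * Real.exp ((1-r)^2*r/2 * v) + (1-p) * Real.exp (-(v/2)) ≤ 1 := by
  set l : ℝ := (1-r)^2*r/2 with hl
  have hl0 : 0 ≤ l := by positivity
  have hl1 : l < 1 := by nlinarith [sq_nonneg (1-r), sq_nonneg r]
  have h1 : Real.exp (l*v) ≤ (1-v) + v * Real.exp l := by
    have h := convexOn_exp.2 (Set.mem_univ (0:ℝ)) (Set.mem_univ l) (by linarith : (0:ℝ) ≤ 1 - v) hv0 (by ring)
    simp only [smul_eq_mul, mul_zero, zero_add, Real.exp_zero, mul_one] at h
    rwa [mul_comm]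
  have h2 : Real.exp (-(v/2)) ≤ (1-v) + v * Real.exp (-(1/2)) := by
    have h := convexOn_exp.2 (Set.mem_univ (0:ℝ)) (Set.mem_univ (-(1/2):ℝ)) (by linarith : (0:ℝ) ≤ 1 - v) hv0 (by ring)
    simp only [smul_eq_mul, mul_zero, zero_add, Real.exp_zero, mul_one] at h
    calc Real.exp (-(v/2)) = Real.exp (v * -(1/2)) := by ring_nf
      _ ≤ _ := h
  have hE1 : (1:ℝ) ≤ Real.exp l := Real.one_le_exp hl0
  have h3 : Real.exp l * (1 - l) ≤ 1 := by
    have h := Real.add_one_le_exp (-l)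
    rw [Real.exp_neg] at h
    have h' : (1 - l) ≤ (Real.exp l)⁻¹ := by linarith
    calc Real.exp l * (1-l) ≤ Real.exp l * (Real.exp l)⁻¹ :=
          mul_le_mul_of_nonneg_left h' (le_of_lt (Real.exp_pos l))
      _ = 1 := mul_inv_cancel₀ (ne_of_gt (Real.exp_pos l))
  have h4 : Real.exp (-(1/2)) ≤ 2/3 := by
    have h := Real.add_one_le_exp (1/2 : ℝ)
    rw [Real.exp_neg, inv_le_comm₀ (Real.exp_pos _) (by norm_num)]
    linarith
  have hF0 : 0 < Real.exp (-(1/2)) := Real.exp_pos _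
  have hfl : 0 < 1 - l := by linarith
  have hend : r * Real.exp l + (1-r) * Real.exp (-(1/2)) ≤ 1 := by
    have hrE : r * Real.exp l * (1 - l) ≤ r := by nlinarith
    have hF1l : Real.exp (-(1/2)) * (1-l) ≤ (2/3)*(1-l) := mul_le_mul_of_nonneg_right h4 hfl.le
    have hpoly : r + (1-r)*((2/3)*(1-l)) ≤ 1 - l := by
      rw [hl]; nlinarith [sq_nonneg (1-r), sq_nonneg r, mul_pos hr0 (sub_pos.2 hr1)]
    have hprod : (r * Real.exp l + (1-r) * Real.exp (-(1/2))) * (1-l) ≤ 1 - l := by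
      calc (r * Real.exp l + (1-r) * Real.exp (-(1/2))) * (1-l)
          = r * Real.exp l * (1-l) + (1-r) * (Real.exp (-(1/2)) * (1-l)) := by ring
        _ ≤ r + (1-r) * ((2/3)*(1-l)) :=
            add_le_add hrE (mul_le_mul_of_nonneg_left hF1l (by linarith))
        _ ≤ 1 - l := hpoly
    exact le_of_mul_le_mul_right (by linarith [hprod]) hfl
  have hendp : p * Real.exp l + (1-p) * Real.exp (-(1/2)) ≤ 1 := by
    nlinarith [mul_nonneg (sub_nonneg.2 hpr) (by linarith : (0:ℝ) ≤ Real.exp l - Real.exp (-(1/2)))]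
  nlinarith [mul_le_mul_of_nonneg_left h1 hp0, mul_le_mul_of_nonneg_left h2 (by linarith : (0:ℝ) ≤ 1-p),
    mul_le_mul_of_nonneg_left hendp hv0]

private noncomputable def boolToReal {n : ℕ} (S : Finset (Fin n)) (b : ↥S → Bool) : Fin n → ℝ :=
  fun j => if h : j ∈ S then (cond (b ⟨j, h⟩) 1 0) else 0

theorem stmt2 {Ω : Type*} [MeasurableSpace Ω] (μ : Measure Ω) [IsProbabilityMeasure μ]
    (n : ℕ) (X : Fin n → Ω → ℝ) (r : ℝ) (hr0 : 0 < r) (hr1 : r < 1)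
    (h01 : ∀ i ω, X i ω = 0 ∨ X i ω = 1)
    (hmeas : ∀ i, Measurable (X i))
    (hind : iIndepFun X μ)
    (hE : ∀ i, ∫ ω, X i ω ∂μ ≤ r)
    (w : Fin n → (Fin n → ℝ) → ℝ)
    (hw01 : ∀ i x, w i x ∈ Set.Icc (0 : ℝ) 1)
    (hprefix : ∀ i : Fin n, ∀ x y : Fin n → ℝ,
      (∀ j : Fin n, (j : ℕ) < (i : ℕ) → x j = y j) → w i x = w i y)
    (B : ℝ) (hB : 1 ≤ B) :
    μ {ω | (3 / ((1 - r) ^ 2 * r)) * B ≤ ∑ i, w i (fun j => X j ω) * X i ω ∧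
        ∑ i, w i (fun j => X j ω) * (1 - X i ω) ≤ B} ≤
      ENNReal.ofReal (Real.exp (-B)) := by
  classical
  set l : ℝ := (1-r)^2*r/2 with hl
  have hl0 : 0 ≤ l := by positivity
  have hl1 : l ≤ 1 := by nlinarith [sq_nonneg (1-r), sq_nonneg r]
  have hW0 : ∀ i (x : Fin n → ℝ), 0 ≤ w i x := fun i x => (hw01 i x).1
  have hW1 : ∀ i (x : Fin n → ℝ), w i x ≤ 1 := fun i x => (hw01 i x).2
  -- measurability of decide
  have hdec : Measurable (fun t : ℝ => decide (t = 1)) := by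
    apply measurable_to_countable'
    intro b
    cases b
    · have : (fun t : ℝ => decide (t = 1)) ⁻¹' {false} = {(1:ℝ)}ᶜ := by
        ext t; simp
      rw [this]; exact (measurableSet_singleton _).compl
    · have : (fun t : ℝ => decide (t = 1)) ⁻¹' {true} = {(1:ℝ)} := by
        ext t; simp
      rw [this]; exact measurableSet_singleton _
  have hcond : ∀ ω (j : Fin n), (cond (decide (X j ω = 1)) (1:ℝ) 0) = X j ω := by
    intro ω j
    rcases h01 j ω with h | h <;> simp [h]
  have hWmeas : ∀ i, Measurable (fun ω => w i (fun j => X j ω)) := by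
    intro i
    have heq : (fun ω => w i (fun j => X j ω)) =
        (fun b : Fin n → Bool => w i (fun j => cond (b j) 1 0)) ∘
          (fun ω j => decide (X j ω = 1)) := by
      funext ω
      exact (congrArg (w i) (funext fun j => (hcond ω j).symm))
    rw [heq]
    exact (measurable_of_countable _).comp
      (measurable_pi_lambda _ fun j => hdec.comp (hmeas j))
  -- the multiplicative increments
  set f : Fin n → Ω → ℝ := fun i ω =>
    (1 - X i ω) * Real.exp (-(w i (fun j => X j ω) / 2)) +
      X i ω * Real.exp (l * w i (fun j => X j ω)) with hfdef
  have hfmeas : ∀ i, Measurable (f i) := by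
    intro i
    exact ((measurable_const.sub (hmeas i)).mul (((hWmeas i).div_const 2).neg.exp)).add
      ((hmeas i).mul (measurable_const.mul (hWmeas i)).exp)
  have hf0 : ∀ i ω, 0 ≤ f i ω := by
    intro i ω
    rcases h01 i ω with h | h <;> simp [hfdef, h] <;> positivity
  have hf3 : ∀ i ω, f i ω ≤ 3 := by
    intro i ω
    have e3 : ∀ t : ℝ, t ≤ 1 → Real.exp t ≤ 3 := by
      intro t ht
      calc Real.exp t ≤ Real.exp 1 := Real.exp_le_exp.2 ht
        _ ≤ 3 := by linarith [Real.exp_one_lt_d9]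
    rcases h01 i ω with h | h <;> simp [hfdef, h]
    · exact le_trans (e3 _ (by nlinarith [hW0 i (fun j => X j ω), hW1 i (fun j => X j ω)])) le_rfl
    · exact le_trans (e3 _ (by nlinarith [hW0 i (fun j => X j ω), hW1 i (fun j => X j ω)])) le_rfl
  -- integrability helper
  have hint : ∀ (g : Ω → ℝ) (C : ℝ), Measurable g → (∀ ω, ‖g ω‖ ≤ C) → Integrable g μ := by
    intro g C hg hC
    exact ⟨hg.aestronglyMeasurable, HasFiniteIntegral.of_bounded (C := C) (Filter.Eventually.of_forall hC)⟩
  -- prefix sets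
  set Sset : ℕ → Finset (Fin n) := fun k => Finset.univ.filter (fun i : Fin n => (i:ℕ) < k) with hSset
  have hGmeas : ∀ k, Measurable (fun ω => ∏ i ∈ Sset k, f i ω) :=
    fun k => Finset.measurable_prod _ (fun i _ => hfmeas i)
  have hG0 : ∀ k ω, 0 ≤ ∏ i ∈ Sset k, f i ω :=
    fun k ω => Finset.prod_nonneg (fun i _ => hf0 i ω)
  have hGbound : ∀ k ω, ‖∏ i ∈ Sset k, f i ω‖ ≤ 3 ^ n := by
    intro k ω
    rw [Real.norm_eq_abs, abs_of_nonneg (hG0 k ω)]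
    calc ∏ i ∈ Sset k, f i ω ≤ ∏ i ∈ Sset k, (3:ℝ) :=
          Finset.prod_le_prod (fun i _ => hf0 i ω) (fun i _ => hf3 i ω)
      _ = 3 ^ (Sset k).card := by rw [Finset.prod_const]
      _ ≤ 3 ^ n := by
          apply pow_le_pow_right₀ (by norm_num)
          calc (Sset k).card ≤ Finset.univ.card := Finset.card_le_card (Finset.filter_subset _ _)
            _ = n := Finset.card_univ.trans (Fintype.card_fin n)
  have hGint : ∀ k, Integrable (fun ω => ∏ i ∈ Sset k, f i ω) μ :=
    fun k => hint _ (3^n) (hGmeas k) (hGbound k)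
  -- main supermartingale bound
  have main : ∀ k, k ≤ n → ∫ ω, ∏ i ∈ Sset k, f i ω ∂μ ≤ 1 := by
    intro k
    induction k with
    | zero =>
      intro _
      have : Sset 0 = ∅ := by ext i; simp [hSset]
      simp [this]
    | succ k ih =>
      intro hk1
      have hk : k < n := hk1
      have IH := ih (le_of_lt hk)
      set K : Fin n := ⟨k, hk⟩ with hK
      have hKS : K ∉ Sset k := by simp [hSset, hK]
      have hSins : Sset (k+1) = insert K (Sset k) := by
        ext i
        simp only [hSset, Finset.mem_filter, Finset.mem_univ, true_and, Finset.mem_insert]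
        constructor
        · intro h
          rcases Nat.lt_succ_iff_lt_or_eq.1 h with h | h
          · exact Or.inr h
          · exact Or.inl (Fin.ext h)
        · rintro (h | h)
          · rw [h]; exact Nat.lt_succ_self k
          · exact Nat.lt_succ_of_lt h
      -- notation
      set G : Ω → ℝ := fun ω => ∏ i ∈ Sset k, f i ω with hGdef
      set A : Ω → ℝ := fun ω => Real.exp (-(w K (fun j => X j ω) / 2)) with hAdef
      set Bf : Ω → ℝ := fun ω =>
        Real.exp (l * w K (fun j => X j ω)) - Real.exp (-(w K (fun j => X j ω) / 2)) with hBfdef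
      have hAmeas : Measurable A := ((hWmeas K).div_const 2).neg.exp
      have hBfmeas : Measurable Bf := (measurable_const.mul (hWmeas K)).exp.sub hAmeas
      have hAbd : ∀ ω, ‖A ω‖ ≤ 1 := by
        intro ω
        rw [Real.norm_eq_abs, abs_of_nonneg (Real.exp_pos _).le]
        exact Real.exp_le_one_iff.2 (by nlinarith [hW0 K (fun j => X j ω)])
      have hBfbd : ∀ ω, ‖Bf ω‖ ≤ 4 := by
        intro ω
        rw [Real.norm_eq_abs]
        have h1 : Real.exp (l * w K (fun j => X j ω)) ≤ 3 := by
          calc Real.exp (l * w K (fun j => X j ω)) ≤ Real.exp 1 :=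
                Real.exp_le_exp.2 (by nlinarith [hW0 K (fun j => X j ω), hW1 K (fun j => X j ω)])
            _ ≤ 3 := by linarith [Real.exp_one_lt_d9]
        have h2 : Real.exp (-(w K (fun j => X j ω) / 2)) ≤ 1 :=
          Real.exp_le_one_iff.2 (by nlinarith [hW0 K (fun j => X j ω)])
        have h3 : 0 < Real.exp (l * w K (fun j => X j ω)) := Real.exp_pos _
        have h4 : 0 < Real.exp (-(w K (fun j => X j ω) / 2)) := Real.exp_pos _
        rw [abs_le]; constructor <;> simp only [hBfdef] <;> linarith
      -- independence of Bf * G from X K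
      have hdisj : Disjoint (Sset k) ({K} : Finset (Fin n)) := by
        simp [Finset.disjoint_singleton_right, hKS]
      have hIFbase := hind.indepFun_finset (Sset k) {K} hdisj hmeas
      set φ : (↥(Sset k) → Bool) → ℝ := fun b =>
        (Real.exp (l * w K (boolToReal (Sset k) b)) -
          Real.exp (-(w K (boolToReal (Sset k) b) / 2))) *
          ∏ i ∈ Sset k, ((1 - boolToReal (Sset k) b i) *
            Real.exp (-(w i (boolToReal (Sset k) b) / 2)) +
            boolToReal (Sset k) b i * Real.exp (l * w i (boolToReal (Sset k) b))) with hφdef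
      have hφmeas : Measurable φ := measurable_of_countable φ
      have hLmeas : Measurable (fun v : ↥(Sset k) → ℝ => φ (fun i => decide (v i = 1))) :=
        hφmeas.comp (measurable_pi_lambda _ fun i => hdec.comp (measurable_pi_apply i))
      have hRmeas : Measurable (fun v : ↥({K} : Finset (Fin n)) → ℝ =>
          v ⟨K, Finset.mem_singleton_self K⟩) := measurable_pi_apply _
      have hIF0 := hIFbase.comp hLmeas hRmeas
      have hLeq : ((fun v : ↥(Sset k) → ℝ => φ (fun i => decide (v i = 1))) ∘
          (fun a (i : ↥(Sset k)) => X i a)) = fun ω => Bf ω * G ω := by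
        funext ω
        have hx : ∀ j (hj : j ∈ Sset k),
            boolToReal (Sset k) (fun i : ↥(Sset k) => decide (X i ω = 1)) j = X j ω := by
          intro j hj
          simp only [boolToReal, dif_pos hj]
          exact hcond ω j
        have hwK : w K (boolToReal (Sset k) (fun i : ↥(Sset k) => decide (X i ω = 1))) =
            w K (fun j => X j ω) := by
          apply hprefix
          intro j hj
          exact hx j (by simp [hSset]; exact hj)
        have hwi : ∀ i ∈ Sset k,
            w i (boolToReal (Sset k) (fun i : ↥(Sset k) => decide (X i ω = 1))) =
              w i (fun j => X j ω) := by
          intro i hi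
          apply hprefix
          intro j hj
          have hik : (i:ℕ) < k := by simpa [hSset] using hi
          exact hx j (by simp [hSset]; omega)
        simp only [Function.comp_apply, hφdef, hBfdef, hGdef, hfdef]
        rw [hwK]
        congr 1
        apply Finset.prod_congr rfl
        intro i hi
        rw [hwi i hi, hx i hi]
      have hIF : IndepFun (fun ω => Bf ω * G ω) (X K) μ := by
        have h2 : ((fun v : ↥({K} : Finset (Fin n)) → ℝ => v ⟨K, Finset.mem_singleton_self K⟩) ∘
            (fun a (i : ↥({K} : Finset (Fin n))) => X i a)) = X K := rfl
        rw [hLeq, h2] at hIF0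
        exact hIF0
      -- integrabilities
      have hBGmeas : Measurable (fun ω => Bf ω * G ω) := hBfmeas.mul (hGmeas k)
      have hBGint : Integrable (fun ω => Bf ω * G ω) μ := by
        apply hint _ (4 * 3^n) hBGmeas
        intro ω
        rw [norm_mul]
        exact mul_le_mul (hBfbd ω) (hGbound k ω) (norm_nonneg _) (by norm_num)
      have hAGint : Integrable (fun ω => A ω * G ω) μ := by
        apply hint _ (1 * 3^n) (hAmeas.mul (hGmeas k))
        intro ω
        rw [Pi.mul_apply, norm_mul]
        exact mul_le_mul (hAbd ω) (hGbound k ω) (norm_nonneg _) (by norm_num)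
      have hXKint : Integrable (X K) μ := by
        apply hint _ 1 (hmeas K)
        intro ω
        rcases h01 K ω with h | h <;> simp [h]
      have hXKnonneg : 0 ≤ ∫ ω, X K ω ∂μ := by
        apply integral_nonneg
        intro ω
        rcases h01 K ω with h | h <;> simp [h]
      have hBGXint : Integrable (fun ω => (Bf ω * G ω) * X K ω) μ := by
        apply hint _ ((4 * 3^n) * 1) (hBGmeas.mul (hmeas K))
        intro ω
        rw [Pi.mul_apply, norm_mul]
        apply mul_le_mul _ _ (norm_nonneg _) (by positivity)
        · rw [norm_mul]
          exact mul_le_mul (hBfbd ω) (hGbound k ω) (norm_nonneg _) (by norm_num)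
        · rcases h01 K ω with h | h <;> simp [h]
      -- the computation
      set p : ℝ := ∫ ω, X K ω ∂μ with hp
      have hsplit : (fun ω => ∏ i ∈ Sset (k+1), f i ω) =
          fun ω => A ω * G ω + (Bf ω * G ω) * X K ω := by
        funext ω
        rw [hSins, Finset.prod_insert hKS]
        simp only [hfdef, hAdef, hBfdef, hGdef]
        ring
      have hstep : ∫ ω, ∏ i ∈ Sset (k+1), f i ω ∂μ =
          ∫ ω, A ω * G ω ∂μ + (∫ ω, Bf ω * G ω ∂μ) * p := by
        rw [hsplit, integral_add hAGint hBGXint]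
        congr 1
        exact hIF.integral_mul_eq_mul_integral hBGint.aestronglyMeasurable hXKint.aestronglyMeasurable
      rw [hstep]
      have hcomb : ∫ ω, A ω * G ω ∂μ + (∫ ω, Bf ω * G ω ∂μ) * p =
          ∫ ω, (A ω + p * Bf ω) * G ω ∂μ := by
        rw [mul_comm (∫ ω, Bf ω * G ω ∂μ) p, ← integral_const_mul p,
          ← integral_add hAGint (hBGint.const_mul p)]
        congr 1
        funext ω
        ring
      rw [hcomb]
      have hmono : ∫ ω, (A ω + p * Bf ω) * G ω ∂μ ≤ ∫ ω, G ω ∂μ := by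
        apply integral_mono _ (hGint k)
        · intro ω
          have hkey : A ω + p * Bf ω ≤ 1 := by
            have := key_ineq r hr0 hr1 p (w K (fun j => X j ω)) hXKnonneg (hE K)
              (hW0 K _) (hW1 K _)
            simp only [hAdef, hBfdef]
            rw [← hl] at this
            nlinarith [this]
          calc (A ω + p * Bf ω) * G ω ≤ 1 * G ω :=
                mul_le_mul_of_nonneg_right hkey (hG0 k ω)
            _ = G ω := one_mul _
        · apply hint _ ((1 + 4) * 3^n) ((hAmeas.add (hBfmeas.const_mul p)).mul (hGmeas k))
          intro ω
          rw [Pi.mul_apply, Pi.add_apply, norm_mul]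
          apply mul_le_mul _ (hGbound k ω) (norm_nonneg _) (by norm_num)
          calc ‖A ω + p * Bf ω‖ ≤ ‖A ω‖ + ‖p * Bf ω‖ := norm_add_le _ _
            _ ≤ 1 + 4 := by
                apply add_le_add (hAbd ω)
                rw [norm_mul]
                calc ‖p‖ * ‖Bf ω‖ ≤ 1 * 4 := by
                      apply mul_le_mul _ (hBfbd ω) (norm_nonneg _) (by norm_num)
                      rw [Real.norm_eq_abs, abs_of_nonneg hXKnonneg]
                      linarith [hE K]
                  _ = 4 := by norm_num
      exact le_trans hmono IH
  -- from integral bound to Markov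
  have hMint := main n (le_refl n)
  have hSn : Sset n = Finset.univ := by
    ext i; simp [hSset, i.is_lt]
  rw [hSn] at hMint
  set M : Ω → ℝ := fun ω => ∏ i ∈ Finset.univ, f i ω with hMdef
  have hMexp : ∀ ω, M ω = Real.exp (l * ∑ i, w i (fun j => X j ω) * X i ω -
      (∑ i, w i (fun j => X j ω) * (1 - X i ω)) / 2) := by
    intro ω
    have : ∀ i, f i ω = Real.exp (l * (w i (fun j => X j ω) * X i ω) -
        (w i (fun j => X j ω) * (1 - X i ω)) / 2) := by
      intro i
      rcases h01 i ω with h | h <;> simp only [hfdef, h] <;> norm_num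
    simp only [hMdef, this, ← Real.exp_sum]
    congr 1
    rw [Finset.sum_sub_distrib, Finset.mul_sum, Finset.sum_div]
  have hsubset : {ω | (3 / ((1 - r) ^ 2 * r)) * B ≤ ∑ i, w i (fun j => X j ω) * X i ω ∧
      ∑ i, w i (fun j => X j ω) * (1 - X i ω) ≤ B} ⊆ {ω | Real.exp B ≤ M ω} := by
    intro ω hω
    obtain ⟨h1, h2⟩ := hω
    rw [Set.mem_setOf_eq, hMexp ω]
    apply Real.exp_le_exp.2
    have hpos : 0 < (1 - r) ^ 2 * r := mul_pos (pow_pos (by linarith) 2) hr0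
    have hne : (1 - r) ^ 2 * r ≠ 0 := hpos.ne'
    have hC : l * (3 / ((1 - r) ^ 2 * r)) = 3/2 := by
      rw [hl]
      field_simp
      linear_combination mul_inv_cancel₀ (sub_pos.2 hr1).ne'
    have hl0' : 0 < l := by rw [hl]; exact div_pos hpos (by norm_num)
    have h1' : l * ((3 / ((1 - r) ^ 2 * r)) * B) ≤ l * ∑ i, w i (fun j => X j ω) * X i ω :=
      mul_le_mul_of_nonneg_left h1 hl0'.le
    rw [← mul_assoc, hC] at h1'
    linarith
  calc μ {ω | (3 / ((1 - r) ^ 2 * r)) * B ≤ ∑ i, w i (fun j => X j ω) * X i ω ∧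
        ∑ i, w i (fun j => X j ω) * (1 - X i ω) ≤ B}
      ≤ μ {ω | Real.exp B ≤ M ω} := measure_mono hsubset
    _ ≤ ENNReal.ofReal (Real.exp (-B)) := by
        have hM0 : ∀ ω, 0 ≤ M ω := fun ω => Finset.prod_nonneg (fun i _ => hf0 i ω)
        have hMint2 : Integrable M μ := by
          apply hint _ (3^n) (Finset.measurable_prod _ (fun i _ => hfmeas i))
          intro ω
          rw [Real.norm_eq_abs, abs_of_nonneg (hM0 ω)]
          calc M ω ≤ ∏ _i ∈ Finset.univ, (3:ℝ) :=
                Finset.prod_le_prod (fun i _ => hf0 i ω) (fun i _ => hf3 i ω)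
            _ = 3 ^ n := by rw [Finset.prod_const, Finset.card_univ, Fintype.card_fin]
        have hmarkov := mul_meas_ge_le_integral_of_nonneg
          (Filter.Eventually.of_forall hM0 : 0 ≤ᵐ[μ] M) hMint2 (Real.exp B)
        have hfin : μ {ω | Real.exp B ≤ M ω} ≠ ⊤ := measure_ne_top μ _
        rw [← ENNReal.ofReal_toReal hfin]
        apply ENNReal.ofReal_le_ofReal
        have hEB : 0 < Real.exp B := Real.exp_pos B
        have hle : (μ {ω | Real.exp B ≤ M ω}).toReal ≤ 1 / Real.exp B := by
          rw [le_div_iff₀ hEB]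
          calc (μ {ω | Real.exp B ≤ M ω}).toReal * Real.exp B
              = Real.exp B * (μ {ω | Real.exp B ≤ M ω}).toReal := mul_comm _ _
            _ ≤ ∫ ω, M ω ∂μ := hmarkov
            _ ≤ 1 := hMint
        calc (μ {ω | Real.exp B ≤ M ω}).toReal ≤ 1 / Real.exp B := hle
          _ = Real.exp (-B) := by rw [Real.exp_neg]; ring
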